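/- Let X be a proper geodesic metric space, Y ⊆ X an α-contracting closed set, x, y ∈ X, γ a geodesic from x to y, and p, q nearest-point projections of x and y onto Y respectively. If d(x, Y) < α or d(p, q) > α, then d(γ, Y) < α and d(x, y) ≥ d(x, p) + d(p, q) + d(q, y) − 8α. -/

import Mathlib

open Metric Set MeasureTheory

variable {X : Type*} [MetricSpace X]

/-- A map `γ` is a geodesic on the parameter set `s`. -/
def IsGeodesicOn (γ : ℝ → X) (s : Set ℝ) : Prop :=
  ∀ t ∈ s, ∀ t' ∈ s, dist (γ t) (γ t') = |t - t'|

/-- The set of nearest-point projections of points of `Z` onto `Y`. -/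
def projSet (Y Z : Set X) : Set X :=
  {y | y ∈ Y ∧ ∃ z ∈ Z, dist z y = Metric.infDist z Y}

/-- `Y` is an `α`-contracting closed subset: any geodesic at distance `≥ α` from `Y`
has projection onto `Y` of diameter `≤ α`. -/
def IsContractingSet (α : ℝ) (Y : Set X) : Prop :=
  IsClosed Y ∧ ∀ (γ : ℝ → X) (s : Set ℝ), IsGeodesicOn γ s →
    (∀ t ∈ s, α ≤ Metric.infDist (γ t) Y) →
    Metric.diam (projSet Y (γ '' s)) ≤ α

/-- `X` is a geodesic space: any two points are joined by a geodesic. -/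
def GeodesicSpace (X : Type*) [MetricSpace X] : Prop :=
  ∀ x y : X, ∃ γ : ℝ → X, γ 0 = x ∧ γ (dist x y) = y ∧
    IsGeodesicOn γ (Set.Icc 0 (dist x y))


private lemma projSet_bounded_aux {Y : Set X} {γ : ℝ → X} {s : Set ℝ} {D : ℝ}
    (hγ : IsGeodesicOn γ (Set.Icc 0 D)) (hs : s ⊆ Set.Icc 0 D) (hD : 0 ≤ D)
    {p : X} (hp : p ∈ Y) :
    Bornology.IsBounded (projSet Y (γ '' s)) := by
  apply (Metric.isBounded_closedBall (x := γ 0) (r := 2*D + dist (γ 0) p)).subset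
  rintro w ⟨hwY, z, ⟨t, ht, rfl⟩, hz⟩
  have ht' := hs ht
  have h0 : (0:ℝ) ∈ Set.Icc (0:ℝ) D := ⟨le_refl 0, hD⟩
  have hd : dist (γ 0) (γ t) = t := by
    rw [hγ 0 h0 t ht', zero_sub, abs_neg, abs_of_nonneg ht'.1]
  have h1 : Metric.infDist (γ t) Y ≤ dist (γ t) p := Metric.infDist_le_dist_of_mem hp
  have h2 : dist (γ t) p ≤ dist (γ t) (γ 0) + dist (γ 0) p := dist_triangle _ _ _
  have h3 : dist w (γ 0) ≤ dist w (γ t) + dist (γ t) (γ 0) := dist_triangle _ _ _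
  have h4 : dist w (γ t) = Metric.infDist (γ t) Y := by rw [dist_comm]; exact hz
  have h5 : dist (γ t) (γ 0) = t := by rw [dist_comm]; exact hd
  rw [Metric.mem_closedBall]
  have htD := ht'.2
  linarith

private lemma contracting_key {α : ℝ} (hα : 0 < α) {Y : Set X}
    [ProperSpace X] (hY : IsContractingSet α Y)
    {x p : X} (hp : p ∈ Y) (hpx : dist x p = Metric.infDist x Y)
    {D : ℝ} (hD : 0 ≤ D) (γ : ℝ → X) (hγ : IsGeodesicOn γ (Set.Icc 0 D))
    (hγ0 : γ 0 = x) {t₁ : ℝ} (ht₁ : t₁ ∈ Set.Icc 0 D)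
    (hfar : ∀ u ∈ Set.Ico 0 t₁, α ≤ Metric.infDist (γ u) Y)
    (hnear : Metric.infDist (γ t₁) Y ≤ α) :
    dist p (γ t₁) ≤ 2 * α := by
  by_cases h0 : t₁ = 0
  · subst h0
    rw [hγ0, dist_comm, hpx, ← hγ0]
    linarith
  · have ht₁pos : 0 < t₁ := lt_of_le_of_ne ht₁.1 (Ne.symm h0)
    apply le_of_forall_pos_le_add
    intro ε hε
    set δ := min (ε/4) t₁ with hδdef
    have hδpos : 0 < δ := lt_min (by linarith) ht₁pos
    have hδle : δ ≤ t₁ := min_le_right _ _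
    have hδε : δ ≤ ε/4 := min_le_left _ _
    set t := t₁ - δ with htdef
    have htmem : t ∈ Set.Ico 0 t₁ := ⟨by simp [htdef]; linarith, by simp [htdef]; linarith⟩
    have hsub : Set.Ico 0 t₁ ⊆ Set.Icc 0 D := fun u hu => ⟨hu.1, le_trans hu.2.le ht₁.2⟩
    have hgeo : IsGeodesicOn γ (Set.Ico 0 t₁) := fun u hu u' hu' => hγ u (hsub hu) u' (hsub hu')
    have hdiam := hY.2 γ _ hgeo hfar
    have hbdd := projSet_bounded_aux hγ hsub hD hp
    have hpmem : p ∈ projSet Y (γ '' Set.Ico 0 t₁) :=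
      ⟨hp, x, ⟨0, ⟨le_refl 0, ht₁pos⟩, hγ0⟩, hpx⟩
    obtain ⟨w, hwY, hw⟩ := hY.1.exists_infDist_eq_dist ⟨p, hp⟩ (γ t)
    have hwmem : w ∈ projSet Y (γ '' Set.Ico 0 t₁) := ⟨hwY, γ t, ⟨t, htmem, rfl⟩, hw.symm⟩
    have hpw : dist p w ≤ α := le_trans (Metric.dist_le_diam_of_mem hbdd hpmem hwmem) hdiam
    have hdist_tt : dist (γ t) (γ t₁) = δ := by
      rw [hγ t (hsub htmem) t₁ ht₁, show t - t₁ = -δ by rw [htdef]; ring,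
        abs_neg, abs_of_nonneg hδpos.le]
    have h1 : Metric.infDist (γ t) Y ≤ α + δ := by
      calc Metric.infDist (γ t) Y ≤ Metric.infDist (γ t₁) Y + dist (γ t) (γ t₁) :=
            Metric.infDist_le_infDist_add_dist
        _ ≤ α + δ := by rw [hdist_tt]; linarith
    have hw2 : dist w (γ t) ≤ α + δ := by
      rw [dist_comm, ← hw]; exact h1
    calc dist p (γ t₁) ≤ dist p w + dist w (γ t) + dist (γ t) (γ t₁) := dist_triangle4 _ _ _ _
      _ ≤ α + (α + δ) + δ := by rw [hdist_tt]; linarith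
      _ ≤ 2 * α + ε := by linarith

/-- Projections onto a contracting set: if `d(x,Y) < α` or `d(p,q) > α`, then a geodesic
from `x` to `y` meets the `α`-neighborhood of `Y` and
`d(x,y) ≥ d(x,p) + d(p,q) + d(q,y) - 8α`. -/
theorem contracting_projection [ProperSpace X] (hX : GeodesicSpace X)
    {α : ℝ} (hα : 0 < α) {Y : Set X} (hY : IsContractingSet α Y)
    {x y p q : X} (hp : p ∈ Y) (hpx : dist x p = Metric.infDist x Y)
    (hq : q ∈ Y) (hqy : dist y q = Metric.infDist y Y)
    (γ : ℝ → X) (hγ : IsGeodesicOn γ (Set.Icc 0 (dist x y)))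
    (hγ0 : γ 0 = x) (hγ1 : γ (dist x y) = y)
    (hcase : Metric.infDist x Y < α ∨ α < dist p q) :
    (∃ t ∈ Set.Icc (0 : ℝ) (dist x y), Metric.infDist (γ t) Y < α) ∧
      dist x p + dist p q + dist q y - 8 * α ≤ dist x y := by
  have hDnn : (0:ℝ) ≤ dist x y := dist_nonneg
  -- Part 1: the geodesic meets the open α-neighborhood of Y
  have hex : ∃ t ∈ Set.Icc (0 : ℝ) (dist x y), Metric.infDist (γ t) Y < α := by
    by_contra h
    push_neg at h
    have hdiam := hY.2 γ _ hγ h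
    have hbdd := projSet_bounded_aux hγ (subset_refl _) hDnn hp
    have hpmem : p ∈ projSet Y (γ '' Set.Icc 0 (dist x y)) :=
      ⟨hp, x, ⟨0, ⟨le_refl 0, hDnn⟩, hγ0⟩, hpx⟩
    have hqmem : q ∈ projSet Y (γ '' Set.Icc 0 (dist x y)) :=
      ⟨hq, y, ⟨dist x y, ⟨hDnn, le_refl _⟩, hγ1⟩, hqy⟩
    have hpq : dist p q ≤ α := le_trans (Metric.dist_le_diam_of_mem hbdd hpmem hqmem) hdiam
    rcases hcase with h1 | h2
    · have := h 0 ⟨le_refl 0, hDnn⟩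
      rw [hγ0] at this
      linarith
    · linarith
  refine ⟨hex, ?_⟩
  -- Part 2: the quantitative bound
  set A := {t : ℝ | t ∈ Set.Icc 0 (dist x y) ∧ Metric.infDist (γ t) Y ≤ α} with hAdef
  obtain ⟨t0, ht0I, ht0lt⟩ := hex
  have hAne : A.Nonempty := ⟨t0, ht0I, ht0lt.le⟩
  have hAbb : BddBelow A := ⟨0, fun t ht => ht.1.1⟩
  have hAba : BddAbove A := ⟨dist x y, fun t ht => ht.1.2⟩
  set t₁ := sInf A with ht₁def
  set t₂ := sSup A with ht₂def
  have ht₁0 : 0 ≤ t₁ := le_csInf hAne fun t ht => ht.1.1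
  have ht₂D : t₂ ≤ dist x y := csSup_le hAne fun t ht => ht.1.2
  have ht₁t₂ : t₁ ≤ t₂ := csInf_le_csSup hAne hAbb hAba
  have ht₁D : t₁ ≤ dist x y := le_trans ht₁t₂ ht₂D
  have ht₂0 : 0 ≤ t₂ := le_trans ht₁0 ht₁t₂
  have ht₁I : t₁ ∈ Set.Icc (0:ℝ) (dist x y) := ⟨ht₁0, ht₁D⟩
  have ht₂I : t₂ ∈ Set.Icc (0:ℝ) (dist x y) := ⟨ht₂0, ht₂D⟩
  have hnear₁ : Metric.infDist (γ t₁) Y ≤ α := by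
    apply le_of_forall_pos_le_add
    intro ε hε
    obtain ⟨u, huA, hu⟩ := (csInf_lt_iff hAbb hAne).1 (lt_add_of_pos_right t₁ hε)
    have ht₁u : t₁ ≤ u := csInf_le hAbb huA
    have hd : dist (γ t₁) (γ u) = |t₁ - u| := hγ t₁ ht₁I u huA.1
    have habs : |t₁ - u| = u - t₁ := by
      rw [abs_of_nonpos (by linarith)]; ring
    have := Metric.infDist_le_infDist_add_dist (x := γ t₁) (y := γ u) (s := Y)
    rw [hd, habs] at this
    have := huA.2
    linarith
  have hnear₂ : Metric.infDist (γ t₂) Y ≤ α := by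
    apply le_of_forall_pos_le_add
    intro ε hε
    obtain ⟨u, huA, hu⟩ := (lt_csSup_iff hAba hAne).1 (by linarith : t₂ - ε < t₂)
    have ht₂u : u ≤ t₂ := le_csSup hAba huA
    have hd : dist (γ t₂) (γ u) = |t₂ - u| := hγ t₂ ht₂I u huA.1
    have habs : |t₂ - u| = t₂ - u := abs_of_nonneg (by linarith)
    have := Metric.infDist_le_infDist_add_dist (x := γ t₂) (y := γ u) (s := Y)
    rw [hd, habs] at this
    have := huA.2
    linarith
  have hfar₁ : ∀ u ∈ Set.Ico 0 t₁, α ≤ Metric.infDist (γ u) Y := by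
    intro u hu
    by_contra hcon
    push_neg at hcon
    have huA : u ∈ A := ⟨⟨hu.1, le_trans hu.2.le ht₁D⟩, hcon.le⟩
    have := csInf_le hAbb huA
    have := hu.2
    linarith
  have hkey₁ : dist p (γ t₁) ≤ 2 * α :=
    contracting_key hα hY hp hpx hDnn γ hγ hγ0 ht₁I hfar₁ hnear₁
  -- reversed geodesic for the q side
  have hkey₂ : dist q (γ t₂) ≤ 2 * α := by
    set γ' : ℝ → X := fun u => γ (dist x y - u) with hγ'def
    have hγ' : IsGeodesicOn γ' (Set.Icc 0 (dist x y)) := by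
      intro u hu u' hu'
      have h1 : dist x y - u ∈ Set.Icc (0:ℝ) (dist x y) := ⟨by linarith [hu.2], by linarith [hu.1]⟩
      have h2 : dist x y - u' ∈ Set.Icc (0:ℝ) (dist x y) := ⟨by linarith [hu'.2], by linarith [hu'.1]⟩
      show dist (γ (dist x y - u)) (γ (dist x y - u')) = |u - u'|
      rw [hγ _ h1 _ h2, show (dist x y - u) - (dist x y - u') = -(u - u') by ring, abs_neg]
    have hγ'0 : γ' 0 = y := by
      show γ (dist x y - 0) = y
      rw [sub_zero, hγ1]
    have hqy' : dist y q = Metric.infDist y Y := hqy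
    have htI' : dist x y - t₂ ∈ Set.Icc (0:ℝ) (dist x y) := ⟨by linarith, by linarith⟩
    have hfar' : ∀ u ∈ Set.Ico 0 (dist x y - t₂), α ≤ Metric.infDist (γ' u) Y := by
      intro u hu
      by_contra hcon
      push_neg at hcon
      have hv : dist x y - u ∈ A :=
        ⟨⟨by linarith [hu.2], by linarith [hu.1]⟩, le_of_lt hcon⟩
      have := le_csSup hAba hv
      have := hu.2
      linarith
    have hnear' : Metric.infDist (γ' (dist x y - t₂)) Y ≤ α := by
      show Metric.infDist (γ (dist x y - (dist x y - t₂))) Y ≤ α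
      rw [show dist x y - (dist x y - t₂) = t₂ by ring]
      exact hnear₂
    have := contracting_key hα hY hq hqy' hDnn γ' hγ' hγ'0 htI' hfar' hnear'
    show dist q (γ t₂) ≤ 2 * α
    have heq : γ' (dist x y - t₂) = γ t₂ := by
      show γ (dist x y - (dist x y - t₂)) = γ t₂
      rw [show dist x y - (dist x y - t₂) = t₂ by ring]
    rwa [heq] at this
  -- assemble
  have h0I : (0:ℝ) ∈ Set.Icc (0:ℝ) (dist x y) := ⟨le_refl 0, hDnn⟩
  have hDI : dist x y ∈ Set.Icc (0:ℝ) (dist x y) := ⟨hDnn, le_refl _⟩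
  have hxt₁ : dist x (γ t₁) = t₁ := by
    rw [← hγ0, hγ 0 h0I t₁ ht₁I, zero_sub, abs_neg, abs_of_nonneg ht₁0]
  have ht₂y : dist (γ t₂) y = dist x y - t₂ := by
    conv_lhs => rw [← hγ1]
    rw [hγ t₂ ht₂I (dist x y) hDI, abs_of_nonpos (by linarith)]
    ring
  have ht₁₂ : dist (γ t₁) (γ t₂) = t₂ - t₁ := by
    rw [hγ t₁ ht₁I t₂ ht₂I, abs_of_nonpos (by linarith)]
    ring
  have hxp : dist x p ≤ t₁ + 2 * α := by
    have := dist_triangle x (γ t₁) p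
    rw [hxt₁] at this
    rw [dist_comm (γ t₁) p] at this
    linarith
  have hpq : dist p q ≤ 2 * α + (t₂ - t₁) + 2 * α := by
    have h4 := dist_triangle4 p (γ t₁) (γ t₂) q
    rw [ht₁₂, dist_comm (γ t₂) q] at h4
    linarith
  have hqyb : dist q y ≤ dist x y - t₂ + 2 * α := by
    have := dist_triangle q (γ t₂) y
    rw [ht₂y] at this
    linarith
  linarith
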